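/- For every ε > 0 there exist d₀(ε) and an absolute constant c' > 0 such that for every integer d ≥ d₀, every integer q ≥ d⁴, and every real β ≥ (1+ε)·β_o(q,d), the complete graph K_{d+1} on d+1 vertices satisfies Z_{K_{d+1}}(q,β) ≤ (1 + q^{−c'·ε}) · q · e^{β·d(d+1)/2}. -/

import Mathlib

open Finset

/-- The order-disorder threshold `β_o(q,d) = ln((q−2)/((q−1)^{1−2/d} − 1))`. -/
noncomputable def betaO (q : ℝ) (d : ℕ) : ℝ :=
  Real.log ((q - 2) / ((q - 1) ^ ((1 : ℝ) - 2 / d) - 1))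

/-- The number of monochromatic edges of `G` under the coloring `σ`. -/
def monoCount {V : Type*} [Fintype V] [DecidableEq V] (G : SimpleGraph V)
    [DecidableRel G.Adj] {k : ℕ} (σ : V → Fin k) : ℕ :=
  (G.edgeFinset.filter (fun e => ∃ u v : V, e = s(u, v) ∧ σ u = σ v)).card

/-- The Potts model partition function `Z_G(q,β)`. -/
noncomputable def pottsZ {V : Type*} [Fintype V] [DecidableEq V] (G : SimpleGraph V)
    [DecidableRel G.Adj] (q : ℕ) (β : ℝ) : ℝ :=
  ∑ σ : V → Fin q, Real.exp (β * monoCount G σ)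

variable {n q : ℕ}

lemma sum_fib (σ : Fin n → Fin q) :
    ∑ c : Fin q, (univ.filter (fun v => σ v = c)).card = n := by
  rw [← Finset.card_eq_sum_card_fiberwise (fun v _ => mem_univ (σ v))]
  simp

lemma sum_sq_fib (σ : Fin n → Fin q) :
    ∑ c : Fin q, ((univ.filter (fun v => σ v = c)).card)^2
      = 2 * monoCount (⊤ : SimpleGraph (Fin n)) σ + n := by
  have h1 : ((univ : Finset (Fin n × Fin n)).filter (fun p => σ p.1 = σ p.2)).card
      = ∑ c : Fin q, ((univ.filter (fun v => σ v = c)).card)^2 := by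
    rw [Finset.card_eq_sum_card_fiberwise (f := fun p => σ p.1)
      (fun p _ => mem_univ (σ p.1))]
    refine Finset.sum_congr rfl (fun c _ => ?_)
    have : ((univ : Finset (Fin n × Fin n)).filter (fun p => σ p.1 = σ p.2)).filter
        (fun p => σ p.1 = c)
        = (univ.filter (fun v => σ v = c)) ×ˢ (univ.filter (fun v => σ v = c)) := by
      ext ⟨u, v⟩
      simp only [mem_filter, mem_product, mem_univ, true_and, filter_filter]
      constructor
      · rintro ⟨h1, h2⟩; exact ⟨h2, h1 ▸ h2⟩
      · rintro ⟨h1, h2⟩; exact ⟨h1.trans h2.symm, h1⟩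
    rw [this, Finset.card_product, sq]
  -- split into diagonal and off-diagonal
  have h2 : ((univ : Finset (Fin n × Fin n)).filter (fun p => σ p.1 = σ p.2)).card
      = ((univ : Finset (Fin n × Fin n)).filter (fun p => σ p.1 = σ p.2 ∧ p.1 ≠ p.2)).card + n := by
    have := Finset.card_filter_add_card_filter_not
      (s := (univ : Finset (Fin n × Fin n)).filter (fun p => σ p.1 = σ p.2))
      (p := fun p => p.1 ≠ p.2)
    rw [filter_filter, filter_filter] at this
    have hd : ((univ : Finset (Fin n × Fin n)).filter (fun p => σ p.1 = σ p.2 ∧ ¬ p.1 ≠ p.2))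
        = (univ : Finset (Fin n)).diag := by
      ext ⟨u, v⟩
      simp only [mem_filter, mem_univ, true_and, Finset.mem_diag, not_not]
      aesop
    rw [hd, Finset.diag_card, card_univ, Fintype.card_fin] at this
    omega
  -- off-diagonal part = 2 * monoCount
  have h3 : ((univ : Finset (Fin n × Fin n)).filter (fun p => σ p.1 = σ p.2 ∧ p.1 ≠ p.2)).card
      = 2 * monoCount (⊤ : SimpleGraph (Fin n)) σ := by
    rw [Finset.card_eq_sum_card_fiberwise
      (f := fun p : Fin n × Fin n => s(p.1, p.2))
      (t := ((⊤ : SimpleGraph (Fin n)).edgeFinset.filter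
        (fun e => ∃ u v : Fin n, e = s(u, v) ∧ σ u = σ v)))
      (by
        rintro ⟨u, v⟩ hp
        simp only [mem_coe, mem_filter, mem_univ, true_and] at hp
        simp only [mem_coe, mem_filter, SimpleGraph.mem_edgeFinset, SimpleGraph.mem_edgeSet,
          SimpleGraph.top_adj]
        exact ⟨hp.2, u, v, rfl, hp.1⟩)]
    have hfib : ∀ e ∈ ((⊤ : SimpleGraph (Fin n)).edgeFinset.filter
        (fun e => ∃ u v : Fin n, e = s(u, v) ∧ σ u = σ v)),
        (filter (fun a : Fin n × Fin n => s(a.1, a.2) = e)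
          (filter (fun p : Fin n × Fin n => σ p.1 = σ p.2 ∧ p.1 ≠ p.2) univ)).card = 2 := by
      intro e he
      simp only [mem_filter, SimpleGraph.mem_edgeFinset] at he
      obtain ⟨hes, u, v, rfl, huv⟩ := he
      have hne : u ≠ v := by
        simpa [SimpleGraph.mem_edgeSet] using hes
      have : (filter (fun a : Fin n × Fin n => s(a.1, a.2) = s(u, v))
          (filter (fun p : Fin n × Fin n => σ p.1 = σ p.2 ∧ p.1 ≠ p.2) univ))
          = {(u, v), (v, u)} := by
        ext ⟨x, y⟩
        simp only [mem_filter, mem_univ, true_and, mem_insert, mem_singleton,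
          Sym2.eq_iff, Prod.mk.injEq]
        constructor
        · rintro ⟨-, h⟩; exact h
        · rintro (⟨rfl, rfl⟩ | ⟨rfl, rfl⟩)
          · exact ⟨⟨huv, hne⟩, Or.inl ⟨rfl, rfl⟩⟩
          · exact ⟨⟨huv.symm, hne.symm⟩, Or.inr ⟨rfl, rfl⟩⟩
      rw [this, Finset.card_insert_of_notMem (by simp [hne, Prod.ext_iff]), Finset.card_singleton]
    rw [Finset.sum_congr rfl hfib, Finset.sum_const, smul_eq_mul, mul_comm, monoCount]
    congr
  omega

lemma sum_sq_le_sq_sum {α : Type*} (s : Finset α) (f : α → ℕ) :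
    ∑ x ∈ s, (f x)^2 ≤ (∑ x ∈ s, f x)^2 := by
  calc ∑ x ∈ s, (f x)^2 = ∑ x ∈ s, f x * f x := by simp [sq]
    _ ≤ ∑ x ∈ s, f x * (∑ y ∈ s, f y) :=
        Finset.sum_le_sum fun i hi => Nat.mul_le_mul_left _ (Finset.single_le_sum
          (fun _ _ => Nat.zero_le _) hi)
    _ = (∑ x ∈ s, f x)^2 := by rw [← Finset.sum_mul, sq]

lemma fib_le (σ : Fin n → Fin q) (c : Fin q) :
    (univ.filter (fun v => σ v = c)).card ≤ n := by
  simpa using Finset.card_le_card (Finset.filter_subset _ (univ : Finset (Fin n)))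

lemma sup_fib_le (σ : Fin n → Fin q) :
    (univ.sup fun c : Fin q => (univ.filter (fun v => σ v = c)).card) ≤ n :=
  Finset.sup_le fun c _ => fib_le σ c

lemma mono_le_large (σ : Fin n → Fin q) :
    2 * monoCount (⊤ : SimpleGraph (Fin n)) σ + n
      ≤ (univ.sup fun c : Fin q => (univ.filter (fun v => σ v = c)).card) * n := by
  set A := univ.sup fun c : Fin q => (univ.filter (fun v => σ v = c)).card with hA
  calc 2 * monoCount (⊤ : SimpleGraph (Fin n)) σ + n
      = ∑ c : Fin q, ((univ.filter (fun v => σ v = c)).card)^2 := (sum_sq_fib σ).symm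
    _ ≤ ∑ c : Fin q, A * (univ.filter (fun v => σ v = c)).card := by
        refine Finset.sum_le_sum fun c _ => ?_
        rw [sq]
        exact Nat.mul_le_mul_right _
          (Finset.le_sup (f := fun c => (univ.filter (fun v => σ v = c)).card) (mem_univ c))
    _ = A * n := by rw [← Finset.mul_sum, sum_fib]

lemma mono_le_small (σ : Fin n → Fin q) (hq : 0 < q) :
    2 * monoCount (⊤ : SimpleGraph (Fin n)) σ + n
      ≤ (univ.sup fun c : Fin q => (univ.filter (fun v => σ v = c)).card)^2
        + (n - (univ.sup fun c : Fin q => (univ.filter (fun v => σ v = c)).card))^2 := by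
  set A := univ.sup fun c : Fin q => (univ.filter (fun v => σ v = c)).card with hA
  obtain ⟨c₀, -, hc₀⟩ := Finset.exists_mem_eq_sup (univ : Finset (Fin q))
    ⟨⟨0, hq⟩, mem_univ _⟩ (fun c => (univ.filter (fun v => σ v = c)).card)
  have hsplit : ∑ c ∈ univ.erase c₀, (univ.filter (fun v => σ v = c)).card
      + (univ.filter (fun v => σ v = c₀)).card = n := by
    rw [Finset.sum_erase_add _ _ (mem_univ c₀), sum_fib]
  have herase : ∑ c ∈ univ.erase c₀, (univ.filter (fun v => σ v = c)).card = n - A := by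
    omega
  calc 2 * monoCount (⊤ : SimpleGraph (Fin n)) σ + n
      = ∑ c : Fin q, ((univ.filter (fun v => σ v = c)).card)^2 := (sum_sq_fib σ).symm
    _ = ∑ c ∈ univ.erase c₀, ((univ.filter (fun v => σ v = c)).card)^2
        + ((univ.filter (fun v => σ v = c₀)).card)^2 :=
        (Finset.sum_erase_add _ _ (mem_univ c₀)).symm
    _ ≤ (n - A)^2 + A^2 := by
        refine Nat.add_le_add ?_ (by rw [← hc₀])
        rw [← herase]
        exact sum_sq_le_sq_sum _ _
    _ = A^2 + (n - A)^2 := by omega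

lemma count_max_fiber (hq : 0 < q) (a : ℕ) :
    ((univ : Finset (Fin n → Fin q)).filter
      (fun σ => (univ.sup fun c : Fin q => (univ.filter (fun v => σ v = c)).card) = a)).card
      ≤ Nat.choose n a * (q ^ (n - a) * q) := by
  have hsub : ((univ : Finset (Fin n → Fin q)).filter
      (fun σ => (univ.sup fun c : Fin q => (univ.filter (fun v => σ v = c)).card) = a))
      ⊆ ((univ.powersetCard a : Finset (Finset (Fin n))) ×ˢ (univ : Finset (Fin q))).biUnion
          (fun Sc => univ.filter (fun σ : Fin n → Fin q => ∀ v ∈ Sc.1, σ v = Sc.2)) := by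
    intro σ hσ
    simp only [mem_filter, mem_univ, true_and] at hσ
    obtain ⟨c₀, -, hc₀⟩ := Finset.exists_mem_eq_sup (univ : Finset (Fin q))
      ⟨⟨0, hq⟩, mem_univ _⟩ (fun c => (univ.filter (fun v => σ v = c)).card)
    refine Finset.mem_biUnion.2 ⟨(univ.filter (fun v => σ v = c₀), c₀), ?_, ?_⟩
    · simp only [Finset.mem_product, Finset.mem_powersetCard, mem_univ, and_true]
      exact ⟨Finset.subset_univ _, by rw [← hc₀, ← hσ]⟩
    · simp only [mem_filter, mem_univ, true_and]
      intro v hv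
      simpa using hv
  calc _ ≤ _ := Finset.card_le_card hsub
    _ ≤ ∑ Sc ∈ (univ.powersetCard a : Finset (Finset (Fin n))) ×ˢ (univ : Finset (Fin q)),
          (univ.filter (fun σ : Fin n → Fin q => ∀ v ∈ Sc.1, σ v = Sc.2)).card :=
        Finset.card_biUnion_le
    _ ≤ ∑ _Sc ∈ (univ.powersetCard a : Finset (Finset (Fin n))) ×ˢ (univ : Finset (Fin q)),
          q ^ (n - a) := ?_
    _ = Nat.choose n a * (q ^ (n - a) * q) := by
        rw [Finset.sum_const, Finset.card_product, Finset.card_powersetCard, card_univ,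
          card_univ, Fintype.card_fin, Fintype.card_fin, smul_eq_mul]
        ring
  refine Finset.sum_le_sum fun Sc hSc => ?_
  obtain ⟨S, c⟩ := Sc
  simp only [Finset.mem_product, Finset.mem_powersetCard] at hSc
  have hcard : S.card = a := hSc.1.2
  have : (univ.filter (fun σ : Fin n → Fin q => ∀ v ∈ S, σ v = c))
      = Fintype.piFinset (fun v => if v ∈ S then ({c} : Finset (Fin q)) else univ) := by
    ext σ
    simp only [mem_filter, mem_univ, true_and, Fintype.mem_piFinset]
    constructor
    · intro h v
      by_cases hv : v ∈ S <;> simp [hv, h v]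
    · intro h v hv
      have := h v
      simpa [hv] using this
  rw [this, Fintype.card_piFinset]
  have : ∀ v : Fin n, (if v ∈ S then ({c} : Finset (Fin q)) else univ).card
      = if v ∈ S then 1 else q := by
    intro v; by_cases hv : v ∈ S <;> simp [hv]
  rw [Finset.prod_congr rfl (fun v _ => this v), Finset.prod_ite, Finset.prod_const_one,
    Finset.prod_const, one_mul, Finset.filter_not, Finset.filter_univ_mem,
    Finset.card_univ_diff, hcard, Fintype.card_fin]

lemma betaO_ge {d q : ℕ} (hd : 3 ≤ d) (hq : 27 ≤ q) :
    2 / (d:ℝ) * Real.log q - 2 / ((q:ℝ) - 2) ≤ betaO q d := by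
  have hdR : (3:ℝ) ≤ d := by exact_mod_cast hd
  have hqR : (27:ℝ) ≤ q := by exact_mod_cast hq
  have hd0 : (0:ℝ) < d := by linarith
  set x : ℝ := (q:ℝ) - 1 with hxdef
  have hx2 : (2:ℝ) ≤ x := by simp [hxdef]; linarith
  have hx0 : (0:ℝ) < x := by linarith
  have hx1 : (1:ℝ) < x := by linarith
  set t : ℝ := 1 - 2 / (d:ℝ) with htdef
  have ht0 : 0 < t := by
    have : 2 / (d:ℝ) ≤ 2/3 := by
      apply div_le_div_of_nonneg_left (by norm_num) (by norm_num) hdR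
    simp [htdef]; linarith
  have ht1 : t ≤ 1 := by simp [htdef]; positivity
  have hxt1 : 1 < x ^ t := by
    rw [Real.one_lt_rpow_iff hx0.le]
    exact Or.inl ⟨hx1, ht0⟩
  have hxtle : x ^ t ≤ x := by
    calc x ^ t ≤ x ^ (1:ℝ) := Real.rpow_le_rpow_of_exponent_le hx1.le ht1
      _ = x := Real.rpow_one x
  have hq2pos : (0:ℝ) < (q:ℝ) - 2 := by linarith
  have hden_pos : (0:ℝ) < x ^ t - 1 := by linarith
  have hsplit : betaO q d = Real.log ((q:ℝ) - 2) - Real.log (x ^ t - 1) := by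
    rw [betaO, Real.log_div (by linarith) (by linarith)]
  have h1 : Real.log (x ^ t - 1) ≤ t * Real.log x := by
    calc Real.log (x ^ t - 1) ≤ Real.log (x ^ t) :=
          (Real.log_le_log_iff hden_pos (by positivity)).2 (by linarith)
      _ = t * Real.log x := Real.log_rpow hx0 t
  -- log x - log (q-2) ≤ 1/(q-2)
  have h2 : Real.log x - Real.log ((q:ℝ) - 2) ≤ 1 / ((q:ℝ) - 2) := by
    rw [← Real.log_div (by linarith) (by linarith)]
    have := Real.log_le_sub_one_of_pos (x := x / ((q:ℝ)-2)) (by positivity)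
    have hxe : x / ((q:ℝ)-2) - 1 = 1 / ((q:ℝ)-2) := by
      rw [hxdef]; field_simp; norm_num
    linarith [hxe ▸ this]
  -- log q - log x ≤ 1/x
  have h3 : Real.log q - Real.log x ≤ 1 / x := by
    rw [← Real.log_div (by linarith) (by linarith)]
    have := Real.log_le_sub_one_of_pos (x := (q:ℝ) / x) (by positivity)
    have hxe : (q:ℝ) / x - 1 = 1 / x := by
      rw [div_sub_one hx0.ne', hxdef]; ring
    linarith [hxe ▸ this]
  have h4 : 2 / (d:ℝ) * (Real.log q - Real.log x) ≤ 1 / ((q:ℝ) - 2) := by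
    have hle : 2 / (d:ℝ) ≤ 1 := by
      rw [div_le_one hd0]; linarith
    have hnn : 0 ≤ Real.log q - Real.log x := by
      have : Real.log x ≤ Real.log q :=
        (Real.log_le_log_iff hx0 (by linarith)).2 (by linarith)
      linarith
    calc 2 / (d:ℝ) * (Real.log q - Real.log x) ≤ 1 * (Real.log q - Real.log x) :=
          mul_le_mul_of_nonneg_right hle hnn
      _ ≤ 1 / x := by linarith
      _ ≤ 1 / ((q:ℝ) - 2) := by
          apply div_le_div_of_nonneg_left (by norm_num) hq2pos (by linarith)
  -- assemble
  have key : Real.log ((q:ℝ)-2) - t * Real.log x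
      ≥ 2 / (d:ℝ) * Real.log q - 2 / ((q:ℝ) - 2) := by
    have ht : t * Real.log x = Real.log x - 2/(d:ℝ) * Real.log x := by
      rw [htdef]; ring
    have expand : Real.log ((q:ℝ)-2) - t * Real.log x
        = (2/(d:ℝ)) * Real.log q - (Real.log x - Real.log ((q:ℝ)-2))
          - (2/(d:ℝ)) * (Real.log q - Real.log x) := by
      rw [ht]; ring
    rw [expand]
    have : 1 / ((q:ℝ)-2) + 1 / ((q:ℝ)-2) = 2 / ((q:ℝ)-2) := by ring
    linarith [h2, h4]
  rw [hsplit]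
  exact le_trans key (sub_le_sub_left h1 _)


lemma weight_small {m dR aR : ℝ} (h : 2*m + (dR+1) ≤ aR^2 + (dR+1-aR)^2) :
    m ≤ dR*(dR+1)/2 - aR*(dR+1-aR) := by nlinarith

lemma weight_large {m dR aR : ℝ} (h : 2*m + (dR+1) ≤ aR*(dR+1)) :
    m ≤ dR*(dR+1)/2 - (dR+1)*(dR+1-aR)/2 := by nlinarith

lemma cube_le {x : ℝ} (hx : 100 ≤ x) : (x+1)^3 ≤ x^4 := by
  have h2 : 100*x ≤ x^2 := by nlinarith
  have h3 : 100*x^2 ≤ x^3 := by nlinarith [mul_le_mul_of_nonneg_left hx (sq_nonneg x)]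
  have h4 : 100*x^3 ≤ x^4 := by
    nlinarith [mul_le_mul_of_nonneg_left h3 (by linarith : (0:ℝ) ≤ x), h2]
  nlinarith [h2, h3, h4]

lemma exp_small_ineq {ε L jR : ℝ} (hε : 0 < ε) (hL0 : 0 ≤ L) (hj : 1 ≤ jR) :
    jR*(L/3) + (jR*L + L) - (1+ε/2)*(7/4*(jR*L)) ≤ (2/3 - ε/4)*L := by
  have h1 : L ≤ jR * L := by nlinarith [mul_nonneg (by linarith : (0:ℝ) ≤ jR - 1) hL0]
  have h2 : ε * L ≤ ε * (jR * L) := mul_le_mul_of_nonneg_left h1 hε.le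
  have h3 : 0 ≤ ε * L := mul_nonneg hε.le hL0
  nlinarith [h1, h2, h3]

lemma exp_large_ineq {ε L jR dR : ℝ} (hε : 0 < ε) (hL0 : 0 ≤ L) (hεL : 48 ≤ ε*L)
    (hεd : 64 ≤ ε*dR) (hd : 100 ≤ dR) (hjd : dR + 1 ≤ 8*jR) :
    (dR+1)*Real.log 2 + (jR*L + L) - (1+ε/2)*(jR*L) ≤ (2/3 - ε/4)*L := by
  have hlog2 : Real.log 2 ≤ 1 := by
    have := Real.log_le_sub_one_of_pos (x := (2:ℝ)) (by norm_num)
    linarith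
  have hlog20 : 0 ≤ Real.log 2 := Real.log_nonneg (by norm_num)
  have hA1 : (dR+1) * Real.log 2 ≤ ε/32 * ((dR+1) * L) := by
    have h1 : Real.log 2 ≤ ε/32 * L := by linarith
    nlinarith [mul_le_mul_of_nonneg_left h1 (by linarith : (0:ℝ) ≤ dR+1)]
  have hA2 : (1/3:ℝ)*L + ε/4*L ≤ ε/32 * ((dR+1) * L) := by
    have h1 : (1/3:ℝ) ≤ ε/64 * (dR+1) := by nlinarith
    have h2 : ε/4 ≤ ε/64 * (dR+1) := by nlinarith
    nlinarith [mul_le_mul_of_nonneg_right (add_le_add h1 h2) hL0]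
  have hA3 : ε/16 * ((dR+1) * L) ≤ ε/2 * (jR*L) := by
    nlinarith [mul_nonneg hε.le (mul_nonneg hL0 (by linarith : (0:ℝ) ≤ 8*jR - (dR+1)))]
  linarith [hA1, hA2, hA3]

set_option maxHeartbeats 1000000 in
lemma beta_step {d q : ℕ} {ε β : ℝ} (hε : 0 < ε)
    (hdR : (100:ℝ) ≤ (d:ℝ)) (hεd : (64:ℝ) ≤ ε * d)
    (hlogd1 : (1:ℝ) ≤ Real.log d) (hεlogd : (12:ℝ) ≤ ε * Real.log d)
    (hq4 : ((d:ℝ))^4 ≤ (q:ℝ)) (hqn : 27 ≤ q)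
    (hβ : (1 + ε) * betaO q d ≤ β) :
    (1 + ε/2) * (2/(d:ℝ) * Real.log q) ≤ β := by
  have hd0 : (0:ℝ) < d := by linarith
  have hqR : (27:ℝ) ≤ (q:ℝ) := by exact_mod_cast hqn
  have hq0 : (0:ℝ) < q := by linarith
  have hL4 : 4 * Real.log d ≤ Real.log q := by
    have h := (Real.log_le_log_iff (by positivity) hq0).2 hq4
    rw [Real.log_pow] at h
    push_cast at h
    linarith
  have hL0 : (4:ℝ) ≤ Real.log q := by linarith
  have hq2p : (0:ℝ) < (q:ℝ) - 2 := by linarith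
  have hd3' : 3 ≤ d := by exact_mod_cast (by linarith : (3:ℝ) ≤ (d:ℝ))
  have hbo := betaO_ge (d := d) (q := q) hd3' hqn
  have hd3pos : (0:ℝ) < (d:ℝ)^3 := by positivity
  have hd3 : (100:ℝ)^3 ≤ (d:ℝ)^3 := by
    apply pow_le_pow_left₀ (by norm_num) hdR
  have hq2 : (d:ℝ)^3 ≤ (q:ℝ) - 2 := by
    nlinarith [mul_le_mul_of_nonneg_left hdR hd3pos.le, hq4, hd3]
  have hkey : 2*(1+ε) / ((q:ℝ)-2) ≤ ε/2 * (2/(d:ℝ) * Real.log q) := by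
    rw [div_le_iff₀ hq2p]
    have e1 : ε/2 * (2/(d:ℝ) * Real.log q) * ((q:ℝ)-2)
        = ε * Real.log q * ((q:ℝ)-2) / d := by
      field_simp
    rw [e1, le_div_iff₀ hd0]
    have e2 : (4:ℝ)*ε ≤ ε*Real.log q := by
      nlinarith [mul_le_mul_of_nonneg_left hL0 hε.le]
    have e3 : 4*ε*((d:ℝ)^3) ≤ ε*Real.log q*((q:ℝ)-2) :=
      mul_le_mul e2 hq2 hd3pos.le (by nlinarith [mul_nonneg hε.le (by linarith : (0:ℝ) ≤ Real.log q)])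
    have e4 : 2*(d:ℝ) ≤ ε*(d:ℝ)^3 := by
      nlinarith [mul_le_mul_of_nonneg_right hεd (by positivity : (0:ℝ) ≤ (d:ℝ)^2), hdR, hd0]
    have e5 : 2*ε*(d:ℝ) ≤ ε*(d:ℝ)^3 := by
      nlinarith [mul_nonneg (mul_nonneg hε.le hd0.le)
        (by nlinarith : (0:ℝ) ≤ (d:ℝ)^2 - 2)]
    linarith [e3, e4, e5, mul_nonneg hε.le hd3pos.le]
  have hmul : (1+ε) * (2/(d:ℝ) * Real.log q - 2/((q:ℝ)-2)) ≤ (1+ε) * betaO q d :=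
    mul_le_mul_of_nonneg_left hbo (by linarith)
  have expand : (1+ε) * (2/(d:ℝ) * Real.log q - 2/((q:ℝ)-2))
      = (1 + ε/2) * (2/(d:ℝ) * Real.log q)
        + (ε/2 * (2/(d:ℝ) * Real.log q) - 2*(1+ε)/((q:ℝ)-2)) := by
    ring
  rw [expand] at hmul
  linarith only [hmul, hβ, hkey]

lemma choose_le_two_pow {n a : ℕ} (h : a ≤ n) : n.choose a ≤ 2 ^ n := by
  rw [← Nat.sum_range_choose n]
  exact Finset.single_le_sum (f := fun i => n.choose i) (fun i _ => Nat.zero_le _)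
    (Finset.mem_range.2 (Nat.lt_succ_of_le h))


set_option maxHeartbeats 2000000 in
theorem stmt11 :
    ∃ c' : ℝ, 0 < c' ∧
      ∀ ε : ℝ, 0 < ε →
      ∃ d₀ : ℕ,
        ∀ d : ℕ, d₀ ≤ d → ∀ q : ℕ, d ^ 4 ≤ q →
        ∀ β : ℝ, (1 + ε) * betaO q d ≤ β →
          pottsZ (⊤ : SimpleGraph (Fin (d + 1))) q β
            ≤ (1 + (q : ℝ) ^ (-(c' * ε))) * q *
              Real.exp (β * (d * (d + 1)) / 2) := by
  refine ⟨1/4, by norm_num, fun ε hε => ?_⟩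
  refine ⟨100 + ⌈Real.exp (12/ε)⌉₊ + ⌈(64:ℝ)/ε⌉₊, fun d hd q hq β hβ => ?_⟩
  have hd100 : 100 ≤ d := by omega
  have hdR : (100:ℝ) ≤ (d:ℝ) := by exact_mod_cast hd100
  have hd0 : (0:ℝ) < d := by linarith
  have hεd : (64:ℝ) ≤ ε * d := by
    have h1 : (64:ℝ)/ε ≤ (⌈(64:ℝ)/ε⌉₊:ℝ) := Nat.le_ceil _
    have h2 : ((⌈(64:ℝ)/ε⌉₊:ℕ):ℝ) ≤ (d:ℝ) := by
      have h3 : ⌈(64:ℝ)/ε⌉₊ ≤ d := by omega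
      exact_mod_cast h3
    have h3 : (64:ℝ)/ε ≤ d := le_trans h1 h2
    rw [div_le_iff₀ hε] at h3
    linarith
  have hεlogd : (12:ℝ) ≤ ε * Real.log d := by
    have h1 : Real.exp (12/ε) ≤ (⌈Real.exp (12/ε)⌉₊:ℝ) := Nat.le_ceil _
    have h2 : ((⌈Real.exp (12/ε)⌉₊:ℕ):ℝ) ≤ (d:ℝ) := by
      have h3 : ⌈Real.exp (12/ε)⌉₊ ≤ d := by omega
      exact_mod_cast h3
    have h4 : 12/ε ≤ Real.log d := by
      rw [Real.le_log_iff_exp_le hd0]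
      linarith
    rw [div_le_iff₀ hε] at h4
    linarith
  have hlogd1 : (1:ℝ) ≤ Real.log d := by
    rw [Real.le_log_iff_exp_le hd0]
    have := Real.exp_one_lt_d9
    linarith
  have hq4 : ((d:ℝ))^4 ≤ (q:ℝ) := by exact_mod_cast hq
  have hd4 : (100:ℝ)^4 ≤ ((d:ℝ))^4 := pow_le_pow_left₀ (by norm_num) hdR 4
  have hqbig : (100000000:ℝ) ≤ q := by norm_num at hd4; linarith
  have hq0 : (0:ℝ) < q := by linarith
  have hq1 : (1:ℝ) < q := by linarith
  have hqn : 27 ≤ q := by exact_mod_cast (by linarith : (27:ℝ) ≤ (q:ℝ))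
  have hqpos : 0 < q := by omega
  set L := Real.log (q:ℝ) with hLdef
  have hexpL : Real.exp L = (q:ℝ) := by rw [hLdef]; exact Real.exp_log hq0
  have hL4 : 4 * Real.log d ≤ L := by
    rw [hLdef]
    have h := (Real.log_le_log_iff (by positivity) hq0).2 hq4
    rw [Real.log_pow] at h
    push_cast at h
    linarith
  have hL0 : 0 ≤ L := by linarith
  have hεL : 48 ≤ ε * L := by
    have h := mul_le_mul_of_nonneg_left hL4 hε.le
    nlinarith [hεlogd, h]
  have hn3 : ((d:ℝ)+1)^3 ≤ q := le_trans (cube_le hdR) hq4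
  have hlogn : Real.log ((d:ℝ)+1) ≤ L/3 := by
    rw [hLdef]
    have h := (Real.log_le_log_iff (by positivity) hq0).2 hn3
    rw [Real.log_pow] at h
    push_cast at h
    linarith
  have hβ2 : (1 + ε/2) * (2/(d:ℝ) * L) ≤ β := by
    rw [hLdef]
    exact beta_step hε hdR hεd hlogd1 hεlogd hq4 hqn hβ
  have hβ0 : 0 ≤ β := by
    have h0 : (0:ℝ) ≤ (1 + ε/2) * (2/(d:ℝ) * L) := by
      apply mul_nonneg (by linarith)
      apply mul_nonneg (by positivity) hL0
    linarith
  -- the bound function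
  set F : ℕ → ℝ := fun a => if 7*(d+1) ≤ 8*a
      then (d:ℝ)*((d:ℝ)+1)/2 - (a:ℝ)*((d:ℝ)+1-(a:ℝ))
      else (d:ℝ)*((d:ℝ)+1)/2 - ((d:ℝ)+1)*((d:ℝ)+1-(a:ℝ))/2 with hF
  set Amax : (Fin (d+1) → Fin q) → ℕ := fun σ =>
    univ.sup fun c : Fin q => (univ.filter (fun v => σ v = c)).card with hAmax
  -- weight bound
  have hweight : ∀ a : ℕ, a ≤ d+1 → ∀ σ : Fin (d+1) → Fin q, Amax σ = a →
      (monoCount (⊤ : SimpleGraph (Fin (d+1))) σ : ℝ) ≤ F a := by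
    intro a ha σ hA
    have hcast : ((d+1-a : ℕ):ℝ) = (d:ℝ)+1-(a:ℝ) := by
      rw [Nat.cast_sub ha]; push_cast; ring
    simp only [hAmax] at hA
    by_cases hc : 7*(d+1) ≤ 8*a
    · have h := mono_le_small σ hqpos
      rw [hA] at h
      have hR := (Nat.cast_le (α := ℝ)).2 h
      push_cast at hR
      rw [hcast] at hR
      have hgoal := weight_small hR
      simp only [hF]
      rw [if_pos hc]
      exact hgoal
    · have h := mono_le_large σ
      rw [hA] at h
      have hR := (Nat.cast_le (α := ℝ)).2 h
      push_cast at hR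
      have hgoal := weight_large hR
      simp only [hF]
      rw [if_neg hc]
      exact hgoal
  -- class-wise bound
  have hclass : ∀ a ∈ Finset.range (d+2),
      ∑ σ ∈ (univ : Finset (Fin (d+1) → Fin q)).filter (fun σ => Amax σ = a),
        Real.exp (β * monoCount (⊤ : SimpleGraph (Fin (d+1))) σ)
      ≤ ((d+1).choose a : ℝ) * ((q:ℝ)^(d+1-a) * q) * Real.exp (β * F a) := by
    intro a ha
    have ha' : a ≤ d+1 := Nat.lt_succ_iff.1 (Finset.mem_range.1 ha)
    calc ∑ σ ∈ (univ : Finset (Fin (d+1) → Fin q)).filter (fun σ => Amax σ = a),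
          Real.exp (β * monoCount (⊤ : SimpleGraph (Fin (d+1))) σ)
        ≤ ((univ : Finset (Fin (d+1) → Fin q)).filter (fun σ => Amax σ = a)).card
            • Real.exp (β * F a) := by
          apply Finset.sum_le_card_nsmul
          intro σ hσ
          have hAσ : Amax σ = a := (Finset.mem_filter.1 hσ).2
          exact Real.exp_le_exp.2 (mul_le_mul_of_nonneg_left (hweight a ha' σ hAσ) hβ0)
      _ = (((univ : Finset (Fin (d+1) → Fin q)).filter (fun σ => Amax σ = a)).card : ℝ)
            * Real.exp (β * F a) := nsmul_eq_mul _ _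
      _ ≤ ((d+1).choose a : ℝ) * ((q:ℝ)^(d+1-a) * q) * Real.exp (β * F a) := by
          apply mul_le_mul_of_nonneg_right _ (Real.exp_pos _).le
          have hcount := count_max_fiber (n := d+1) (q := q) hqpos a
          calc (((univ : Finset (Fin (d+1) → Fin q)).filter (fun σ => Amax σ = a)).card : ℝ)
              ≤ (((d+1).choose a * (q ^ (d+1-a) * q) : ℕ) : ℝ) := by
                exact_mod_cast Nat.cast_le.2 (le_of_eq_of_le (by simp only [hAmax]; rfl) hcount)
            _ = ((d+1).choose a : ℝ) * ((q:ℝ)^(d+1-a) * q) := by push_cast; ring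
  -- per-term numeric bound for a ≤ d
  have hper : ∀ a ∈ Finset.range (d+1),
      ((d+1).choose a : ℝ) * ((q:ℝ)^(d+1-a) * q) * Real.exp (β * F a)
        ≤ Real.exp ((2/3 - ε/4) * L) * Real.exp (β * ((d:ℝ)*((d:ℝ)+1)/2)) := by
    intro a ha
    have haa : a ≤ d := Nat.lt_succ_iff.1 (Finset.mem_range.1 ha)
    have ha' : a ≤ d + 1 := by omega
    set j : ℕ := d + 1 - a with hjdef
    have hj1 : 1 ≤ j := by omega
    have hjR : (j:ℝ) = (d:ℝ)+1-(a:ℝ) := by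
      rw [hjdef, Nat.cast_sub ha']; push_cast; ring
    have hjR1 : (1:ℝ) ≤ (j:ℝ) := by exact_mod_cast hj1
    have hjL0 : 0 ≤ (j:ℝ) * L := mul_nonneg (by linarith) hL0
    have hq_pow : ((q:ℝ)^j * q) = Real.exp ((j:ℝ)*L + L) := by
      rw [Real.exp_add, Real.exp_nat_mul, hexpL]
    by_cases hc : 7*(d+1) ≤ 8*a
    · -- small j case
      have hFa : F a = (d:ℝ)*((d:ℝ)+1)/2 - (a:ℝ)*(j:ℝ) := by
        simp only [hF]; rw [if_pos hc, hjR]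
      have hcR : 7*((d:ℝ)+1) ≤ 8*(a:ℝ) := by exact_mod_cast hc
      have hCb : ((d+1).choose a : ℝ) ≤ Real.exp ((j:ℝ) * (L/3)) := by
        have h1 : (d+1).choose a = (d+1).choose j := by
          rw [hjdef, Nat.choose_symm ha']
        have h2 : (d+1).choose j ≤ (d+1)^j := Nat.choose_le_pow _ _
        have h3 : ((d+1).choose a : ℝ) ≤ ((d:ℝ)+1)^j := by
          rw [h1]
          exact_mod_cast h2
        have h4 : ((d:ℝ)+1)^j = Real.exp ((j:ℝ) * Real.log ((d:ℝ)+1)) := by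
          rw [Real.exp_nat_mul, Real.exp_log (by linarith)]
        rw [h4] at h3
        exact le_trans h3 (Real.exp_le_exp.2
          (mul_le_mul_of_nonneg_left hlogn (by linarith)))
      have hD : (1+ε/2) * (7/4*((j:ℝ)*L)) ≤ β * ((a:ℝ)*(j:ℝ)) := by
        have haj0 : (0:ℝ) ≤ (a:ℝ)*(j:ℝ) := mul_nonneg (Nat.cast_nonneg a) (by linarith)
        have step1 : ((1+ε/2) * (2/(d:ℝ)*L)) * ((a:ℝ)*(j:ℝ)) ≤ β * ((a:ℝ)*(j:ℝ)) :=
          mul_le_mul_of_nonneg_right hβ2 haj0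
        have step2 : (7:ℝ)/4*((j:ℝ)*L) ≤ 2/(d:ℝ)*L * ((a:ℝ)*(j:ℝ)) := by
          have hdiff : 2/(d:ℝ)*L*((a:ℝ)*(j:ℝ)) - 7/4*((j:ℝ)*L)
              = ((j:ℝ)*L)*(8*(a:ℝ) - 7*(d:ℝ))/(4*(d:ℝ)) := by
            field_simp
            ring
          have hnum : (0:ℝ) ≤ ((j:ℝ)*L)*(8*(a:ℝ) - 7*(d:ℝ)) :=
            mul_nonneg hjL0 (by linarith)
          linarith [hdiff, div_nonneg hnum (by linarith : (0:ℝ) ≤ 4*(d:ℝ))]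
        calc (1+ε/2) * (7/4*((j:ℝ)*L)) ≤ (1+ε/2) * (2/(d:ℝ)*L * ((a:ℝ)*(j:ℝ))) :=
              mul_le_mul_of_nonneg_left step2 (by linarith)
          _ = ((1+ε/2) * (2/(d:ℝ)*L)) * ((a:ℝ)*(j:ℝ)) := by ring
          _ ≤ β * ((a:ℝ)*(j:ℝ)) := step1
      have hexpFa : Real.exp (β * F a)
          ≤ Real.exp (β * ((d:ℝ)*((d:ℝ)+1)/2) - (1+ε/2) * (7/4*((j:ℝ)*L))) := by
        apply Real.exp_le_exp.2
        rw [hFa, mul_sub]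
        linarith
      calc ((d+1).choose a : ℝ) * ((q:ℝ)^(d+1-a) * q) * Real.exp (β * F a)
          ≤ Real.exp ((j:ℝ) * (L/3)) * Real.exp ((j:ℝ)*L + L)
              * Real.exp (β * ((d:ℝ)*((d:ℝ)+1)/2) - (1+ε/2) * (7/4*((j:ℝ)*L))) := by
            apply mul_le_mul
            · apply mul_le_mul hCb (le_of_eq hq_pow) (by positivity) (Real.exp_pos _).le
            · exact hexpFa
            · positivity
            · positivity
        _ = Real.exp ((j:ℝ) * (L/3) + ((j:ℝ)*L + L)
              + (β * ((d:ℝ)*((d:ℝ)+1)/2) - (1+ε/2) * (7/4*((j:ℝ)*L)))) := by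
            rw [← Real.exp_add, ← Real.exp_add]
        _ ≤ Real.exp ((2/3 - ε/4) * L + β * ((d:ℝ)*((d:ℝ)+1)/2)) := by
            apply Real.exp_le_exp.2
            linarith [exp_small_ineq (L := L) (jR := (j:ℝ)) hε hL0 hjR1]
        _ = Real.exp ((2/3 - ε/4) * L) * Real.exp (β * ((d:ℝ)*((d:ℝ)+1)/2)) :=
            Real.exp_add _ _
    · -- large j case
      have hFa : F a = (d:ℝ)*((d:ℝ)+1)/2 - ((d:ℝ)+1)*(j:ℝ)/2 := by
        simp only [hF]; rw [if_neg hc, hjR]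
      have hjd : (d:ℝ)+1 ≤ 8*(j:ℝ) := by
        have h8 : d+1 ≤ 8*j := by omega
        exact_mod_cast h8
      have hCb : ((d+1).choose a : ℝ) ≤ Real.exp (((d:ℝ)+1) * Real.log 2) := by
        have h2 : (d+1).choose a ≤ 2^(d+1) := choose_le_two_pow ha'
        have h3 : ((d+1).choose a : ℝ) ≤ (2:ℝ)^(d+1) := by exact_mod_cast h2
        have h4 : ((2:ℝ))^(d+1) = Real.exp (((d+1:ℕ):ℝ) * Real.log 2) := by
          rw [Real.exp_nat_mul, Real.exp_log (by norm_num)]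
        rw [h4] at h3
        refine le_trans h3 (Real.exp_le_exp.2 (le_of_eq ?_))
        push_cast
        ring
      have hD : (1+ε/2) * ((j:ℝ)*L) ≤ β * (((d:ℝ)+1)*(j:ℝ)/2) := by
        have hval0 : (0:ℝ) ≤ ((d:ℝ)+1)*(j:ℝ)/2 := by positivity
        have step1 : ((1+ε/2) * (2/(d:ℝ)*L)) * (((d:ℝ)+1)*(j:ℝ)/2)
            ≤ β * (((d:ℝ)+1)*(j:ℝ)/2) := mul_le_mul_of_nonneg_right hβ2 hval0
        have step2 : (j:ℝ)*L ≤ 2/(d:ℝ)*L * (((d:ℝ)+1)*(j:ℝ)/2) := by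
          have hdiff : 2/(d:ℝ)*L * (((d:ℝ)+1)*(j:ℝ)/2) - (j:ℝ)*L = ((j:ℝ)*L)/(d:ℝ) := by
            field_simp
            ring
          linarith [hdiff, div_nonneg hjL0 hd0.le]
        calc (1+ε/2) * ((j:ℝ)*L) ≤ (1+ε/2) * (2/(d:ℝ)*L * (((d:ℝ)+1)*(j:ℝ)/2)) :=
              mul_le_mul_of_nonneg_left step2 (by linarith)
          _ = ((1+ε/2) * (2/(d:ℝ)*L)) * (((d:ℝ)+1)*(j:ℝ)/2) := by ring
          _ ≤ β * (((d:ℝ)+1)*(j:ℝ)/2) := step1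
      have hexpFa : Real.exp (β * F a)
          ≤ Real.exp (β * ((d:ℝ)*((d:ℝ)+1)/2) - (1+ε/2) * ((j:ℝ)*L)) := by
        apply Real.exp_le_exp.2
        rw [hFa, mul_sub]
        linarith
      calc ((d+1).choose a : ℝ) * ((q:ℝ)^(d+1-a) * q) * Real.exp (β * F a)
          ≤ Real.exp (((d:ℝ)+1) * Real.log 2) * Real.exp ((j:ℝ)*L + L)
              * Real.exp (β * ((d:ℝ)*((d:ℝ)+1)/2) - (1+ε/2) * ((j:ℝ)*L)) := by
            apply mul_le_mul
            · apply mul_le_mul hCb (le_of_eq hq_pow) (by positivity) (Real.exp_pos _).le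
            · exact hexpFa
            · positivity
            · positivity
        _ = Real.exp (((d:ℝ)+1) * Real.log 2 + ((j:ℝ)*L + L)
              + (β * ((d:ℝ)*((d:ℝ)+1)/2) - (1+ε/2) * ((j:ℝ)*L))) := by
            rw [← Real.exp_add, ← Real.exp_add]
        _ ≤ Real.exp ((2/3 - ε/4) * L + β * ((d:ℝ)*((d:ℝ)+1)/2)) := by
            apply Real.exp_le_exp.2
            linarith [exp_large_ineq (L := L) (jR := (j:ℝ)) (dR := (d:ℝ))
              hε hL0 hεL hεd hdR hjd]
        _ = Real.exp ((2/3 - ε/4) * L) * Real.exp (β * ((d:ℝ)*((d:ℝ)+1)/2)) :=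
            Real.exp_add _ _
  -- assemble everything
  have hdecomp : pottsZ (⊤ : SimpleGraph (Fin (d+1))) q β
      = ∑ a ∈ Finset.range (d+2),
          ∑ σ ∈ (univ : Finset (Fin (d+1) → Fin q)).filter (fun σ => Amax σ = a),
            Real.exp (β * monoCount (⊤ : SimpleGraph (Fin (d+1))) σ) := by
    rw [pottsZ]
    rw [← Finset.sum_fiberwise_of_maps_to (g := Amax)
      (t := Finset.range (d+2)) (fun σ _ => Finset.mem_range.2 (Nat.lt_succ_of_le (by
        rw [hAmax]; exact sup_fib_le σ)))]
  have hlast : ((d+1).choose (d+1) : ℝ) * ((q:ℝ)^(d+1-(d+1)) * q) * Real.exp (β * F (d+1))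
      = (q:ℝ) * Real.exp (β * ((d:ℝ)*((d:ℝ)+1)/2)) := by
    have hF1 : F (d+1) = (d:ℝ)*((d:ℝ)+1)/2 := by
      simp only [hF]
      rw [if_pos (by omega : 7*(d+1) ≤ 8*(d+1))]
      push_cast
      ring
    rw [hF1, Nat.choose_self, Nat.sub_self, pow_zero]
    push_cast
    ring
  have hqrpow : Real.exp (L/3) * Real.exp ((2/3 - ε/4) * L) = (q:ℝ) * (q:ℝ) ^ (-(1/4 * ε)) := by
    rw [Real.rpow_def_of_pos hq0, ← hLdef, ← hexpL, ← Real.exp_add, ← Real.exp_add]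
    congr 1
    ring
  calc pottsZ (⊤ : SimpleGraph (Fin (d+1))) q β
      = ∑ a ∈ Finset.range (d+2),
          ∑ σ ∈ (univ : Finset (Fin (d+1) → Fin q)).filter (fun σ => Amax σ = a),
            Real.exp (β * monoCount (⊤ : SimpleGraph (Fin (d+1))) σ) := hdecomp
    _ ≤ ∑ a ∈ Finset.range (d+2),
          ((d+1).choose a : ℝ) * ((q:ℝ)^(d+1-a) * q) * Real.exp (β * F a) :=
        Finset.sum_le_sum hclass
    _ = (∑ a ∈ Finset.range (d+1),
          ((d+1).choose a : ℝ) * ((q:ℝ)^(d+1-a) * q) * Real.exp (β * F a))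
        + ((d+1).choose (d+1) : ℝ) * ((q:ℝ)^(d+1-(d+1)) * q) * Real.exp (β * F (d+1)) :=
        Finset.sum_range_succ _ _
    _ ≤ (∑ _a ∈ Finset.range (d+1),
          Real.exp ((2/3 - ε/4) * L) * Real.exp (β * ((d:ℝ)*((d:ℝ)+1)/2)))
        + (q:ℝ) * Real.exp (β * ((d:ℝ)*((d:ℝ)+1)/2)) := by
        rw [hlast]
        exact add_le_add_left (Finset.sum_le_sum hper) _
    _ = ((d:ℝ)+1) * (Real.exp ((2/3 - ε/4) * L) * Real.exp (β * ((d:ℝ)*((d:ℝ)+1)/2)))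
        + (q:ℝ) * Real.exp (β * ((d:ℝ)*((d:ℝ)+1)/2)) := by
        rw [Finset.sum_const, Finset.card_range, nsmul_eq_mul]
        push_cast
        ring
    _ ≤ Real.exp (L/3) * (Real.exp ((2/3 - ε/4) * L) * Real.exp (β * ((d:ℝ)*((d:ℝ)+1)/2)))
        + (q:ℝ) * Real.exp (β * ((d:ℝ)*((d:ℝ)+1)/2)) := by
        apply add_le_add_left
        apply mul_le_mul_of_nonneg_right _ (by positivity)
        calc (d:ℝ)+1 = Real.exp (Real.log ((d:ℝ)+1)) := (Real.exp_log (by linarith)).symm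
          _ ≤ Real.exp (L/3) := Real.exp_le_exp.2 hlogn
    _ = (1 + (q : ℝ) ^ (-(1/4 * ε))) * q * Real.exp (β * ((d:ℝ) * ((d:ℝ) + 1)) / 2) := by
        rw [← mul_assoc, hqrpow]
        rw [mul_div_assoc β]
        ring
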